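/- For every β ∈ ℝ, the function f̂_β(x,t) = (c²t² − ‖ν(x)‖²)^β, where ν is the reflection in the hyperplane H(a,b), satisfies the Euler–Poisson–Darboux equation ∂²u/∂t² − ((2β − 1 + d)/t)·∂u/∂t = c²·Δu on the region {(x,t) : t > 0, ‖ν(x)‖ < ct}. -/

import Mathlib

namespace EPDAux

variable {d : ℕ}

noncomputable def refl (a : EuclideanSpace ℝ (Fin d)) :
    EuclideanSpace ℝ (Fin d) →L[ℝ] EuclideanSpace ℝ (Fin d) :=
  ContinuousLinearMap.id ℝ _ - (2 / (inner ℝ a a : ℝ)) • ((innerSL ℝ a).smulRight a)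

lemma refl_apply (a y : EuclideanSpace ℝ (Fin d)) :
    refl a y = y - (2 / (inner ℝ a a : ℝ) * (inner ℝ a y : ℝ)) • a := by
  simp only [refl, ContinuousLinearMap.sub_apply, ContinuousLinearMap.id_apply,
    ContinuousLinearMap.smul_apply, ContinuousLinearMap.smulRight_apply, innerSL_apply_apply,
    smul_smul]

lemma inner_refl_refl (a : EuclideanSpace ℝ (Fin d)) (ha : a ≠ 0)
    (y z : EuclideanSpace ℝ (Fin d)) :
    (inner ℝ (refl a y) (refl a z) : ℝ) = (inner ℝ y z : ℝ) := by
  have hA : (0:ℝ) < (inner ℝ a a : ℝ) := real_inner_self_eq_norm_sq a ▸ pow_pos (norm_pos_iff.2 ha) 2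
  rw [refl_apply, refl_apply]
  simp only [inner_sub_left, inner_sub_right, real_inner_smul_left, real_inner_smul_right,
    real_inner_comm a y]
  set A : ℝ := (inner ℝ a a : ℝ)
  set p : ℝ := (inner ℝ a y : ℝ)
  set q : ℝ := (inner ℝ a z : ℝ)
  field_simp
  ring

lemma inner_refl_left (a : EuclideanSpace ℝ (Fin d))
    (y z : EuclideanSpace ℝ (Fin d)) :
    (inner ℝ (refl a y) z : ℝ) = (inner ℝ y (refl a z) : ℝ) := by
  rw [refl_apply, refl_apply]
  simp only [inner_sub_left, inner_sub_right, real_inner_smul_left, real_inner_smul_right,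
    real_inner_comm a y, real_inner_comm a z, real_inner_comm y z]
  ring

lemma sum_inner_single_sq (w : EuclideanSpace ℝ (Fin d)) :
    ∑ i : Fin d, (inner ℝ w (EuclideanSpace.single i (1:ℝ)) : ℝ) ^ 2 = ‖w‖ ^ 2 := by
  rw [← real_inner_self_eq_norm_sq, PiLp.inner_apply]
  refine Finset.sum_congr rfl fun i _ => ?_
  rw [EuclideanSpace.inner_single_right]
  simp [pow_two]

end EPDAux

open EPDAux

set_option maxHeartbeats 1000000

theorem epd_equation_hyperplane_reflected
    (d : ℕ) (hd : 1 ≤ d) (c β : ℝ) (hc : 0 < c)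
    (a : EuclideanSpace ℝ (Fin d)) (ha : a ≠ 0) (b : ℝ)
    (ν : EuclideanSpace ℝ (Fin d) → EuclideanSpace ℝ (Fin d))
    (hν : ∀ x, ν x = x + (2 * ((b - (inner ℝ a x : ℝ)) / (inner ℝ a a : ℝ))) • a)
    (f : EuclideanSpace ℝ (Fin d) → ℝ → ℝ)
    (hf : ∀ x t, f x t = (c ^ 2 * t ^ 2 - ‖ν x‖ ^ 2) ^ β) :
    ∀ (x : EuclideanSpace ℝ (Fin d)) (t : ℝ), 0 < t → ‖ν x‖ < c * t →
      deriv (fun s => deriv (fun s' => f x s') s) t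
        - ((2 * β - 1 + d) / t) * deriv (fun s => f x s) t
      = c ^ 2 * ∑ i : Fin d,
          iteratedFDeriv ℝ 2 (fun y => f y t) x
            (fun _ => EuclideanSpace.single i (1 : ℝ)) := by
  classical
  have hA : (0:ℝ) < (inner ℝ a a : ℝ) := real_inner_self_eq_norm_sq a ▸ pow_pos (norm_pos_iff.2 ha) 2
  set L := EPDAux.refl a with hLdef
  have hνL : ∀ y, ν y = L y + (2 * b / (inner ℝ a a : ℝ)) • a := by
    intro y
    have hco : (2 * ((b - (inner ℝ a y : ℝ)) / (inner ℝ a a : ℝ)) : ℝ)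
        = 2 * b / (inner ℝ a a : ℝ) - 2 / (inner ℝ a a : ℝ) * (inner ℝ a y : ℝ) := by
      field_simp
    rw [hν, refl_apply, hco, sub_smul]
    module
  have hνderiv : ∀ y, HasFDerivAt ν L y := by
    intro y
    exact ((L.hasFDerivAt).add_const _).congr_of_eventuallyEq
      (Filter.Eventually.of_forall fun y => (hνL y))
  have hνcont : Continuous ν := by
    have : ν = fun y => L y + (2 * b / (inner ℝ a a : ℝ)) • a := funext hνL
    rw [this]; fun_prop
  intro x t ht hxt
  have hct : (0:ℝ) < c * t := mul_pos hc ht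
  have hupos : (0:ℝ) < c ^ 2 * t ^ 2 - ‖ν x‖ ^ 2 := by nlinarith [norm_nonneg (ν x)]
  ---------------- time part ----------------
  have h_ude : ∀ (K s : ℝ), HasDerivAt (fun s' : ℝ => c ^ 2 * s' ^ 2 - K) (c ^ 2 * (2 * s)) s := by
    intro K s
    have h1 : HasDerivAt (fun s' : ℝ => c ^ 2 * s' ^ 2) (c ^ 2 * (2 * s)) s := by
      simpa using (hasDerivAt_pow 2 s).const_mul (c ^ 2)
    exact h1.sub_const K
  have hfd : ∀ s : ℝ, 0 < c ^ 2 * s ^ 2 - ‖ν x‖ ^ 2 →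
      HasDerivAt (fun s' => f x s')
        (β * (c ^ 2 * s ^ 2 - ‖ν x‖ ^ 2) ^ (β - 1) * (c ^ 2 * (2 * s))) s := by
    intro s hs
    have h0 := (h_ude (‖ν x‖ ^ 2) s).rpow_const (p := β) (Or.inl hs.ne')
    have h1 := h0.congr_of_eventuallyEq (Filter.Eventually.of_forall fun s' => (hf x s'))
    refine h1.congr_deriv ?_
    ring
  have hSopen : IsOpen {s : ℝ | 0 < c ^ 2 * s ^ 2 - ‖ν x‖ ^ 2} :=
    isOpen_lt continuous_const (by fun_prop)
  have hev1 : (fun s => deriv (fun s' => f x s') s) =ᶠ[nhds t]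
      (fun s => β * (c ^ 2 * s ^ 2 - ‖ν x‖ ^ 2) ^ (β - 1) * (c ^ 2 * (2 * s))) :=
    Filter.eventually_of_mem (hSopen.mem_nhds hupos) fun s hs => (hfd s hs).deriv
  have hderiv2 : HasDerivAt
      (fun s => β * (c ^ 2 * s ^ 2 - ‖ν x‖ ^ 2) ^ (β - 1) * (c ^ 2 * (2 * s)))
      ((β * ((β - 1) * (c ^ 2 * t ^ 2 - ‖ν x‖ ^ 2) ^ (β - 1 - 1) * (c ^ 2 * (2 * t))))
          * (c ^ 2 * (2 * t))
        + (β * (c ^ 2 * t ^ 2 - ‖ν x‖ ^ 2) ^ (β - 1)) * (c ^ 2 * 2)) t := by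
    have h1 : HasDerivAt (fun s : ℝ => β * (c ^ 2 * s ^ 2 - ‖ν x‖ ^ 2) ^ (β - 1))
        (β * ((β - 1) * (c ^ 2 * t ^ 2 - ‖ν x‖ ^ 2) ^ (β - 1 - 1) * (c ^ 2 * (2 * t)))) t := by
      have h0 := (((h_ude (‖ν x‖ ^ 2) t).rpow_const (p := β - 1) (Or.inl hupos.ne'))).const_mul β
      refine h0.congr_deriv ?_
      ring
    have h2 : HasDerivAt (fun s : ℝ => c ^ 2 * (2 * s)) (c ^ 2 * 2) t := by
      simpa [mul_assoc] using ((hasDerivAt_id t).const_mul 2).const_mul (c ^ 2)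
    exact h1.mul h2
  have htime2 : deriv (fun s => deriv (fun s' => f x s') s) t
      = (β * ((β - 1) * (c ^ 2 * t ^ 2 - ‖ν x‖ ^ 2) ^ (β - 1 - 1) * (c ^ 2 * (2 * t))))
          * (c ^ 2 * (2 * t))
        + (β * (c ^ 2 * t ^ 2 - ‖ν x‖ ^ 2) ^ (β - 1)) * (c ^ 2 * 2) := by
    rw [hev1.deriv_eq]
    exact hderiv2.deriv
  have htime1 : deriv (fun s => f x s) t
      = β * (c ^ 2 * t ^ 2 - ‖ν x‖ ^ 2) ^ (β - 1) * (c ^ 2 * (2 * t)) :=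
    (hfd t hupos).deriv
  ---------------- space part ----------------
  set g : EuclideanSpace ℝ (Fin d) → ℝ := fun y => c ^ 2 * t ^ 2 - ‖ν y‖ ^ 2 with hgdef
  set G : EuclideanSpace ℝ (Fin d) → (EuclideanSpace ℝ (Fin d) →L[ℝ] ℝ) :=
    fun y => (-2 : ℝ) • ((innerSL ℝ (ν y)).comp L) with hGdef
  have hGapp : ∀ y w, G y w = -2 * (inner ℝ (ν y) (L w) : ℝ) := by
    intro y w
    simp [hGdef, innerSL_apply_apply]
  have hg : ∀ y, HasFDerivAt g (G y) y := by
    intro y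
    have hi : HasFDerivAt (fun y => (inner ℝ (ν y) (ν y) : ℝ))
        ((fderivInnerCLM ℝ (ν y, ν y)).comp (L.prod L)) y :=
      (hνderiv y).inner ℝ (hνderiv y)
    have hn : HasFDerivAt (fun y => ‖ν y‖ ^ 2 : _ → ℝ)
        ((fderivInnerCLM ℝ (ν y, ν y)).comp (L.prod L)) y := by
      refine hi.congr_of_eventuallyEq (Filter.Eventually.of_forall fun y' => ?_)
      exact (real_inner_self_eq_norm_sq _).symm
    have h2 := hn.const_sub (c ^ 2 * t ^ 2)
    have hGy : G y = -((fderivInnerCLM ℝ (ν y, ν y)).comp (L.prod L)) := by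
      ext w
      simp [hGapp, fderivInnerCLM_apply, real_inner_comm (L w) (ν y)]
      ring
    rw [hgdef, hGy]
    exact h2
  set Φ : EuclideanSpace ℝ (Fin d) → (EuclideanSpace ℝ (Fin d) →L[ℝ] ℝ) :=
    fun y => (β * g y ^ (β - 1)) • G y with hΦdef
  have hΦd : ∀ y, 0 < g y → HasFDerivAt (fun y' => f y' t) (Φ y) y := by
    intro y hy
    have := ((hg y).rpow_const (p := β) (Or.inl hy.ne'))
    exact this.congr_of_eventuallyEq (Filter.Eventually.of_forall fun y' => (hf y' t))
  have hS2open : IsOpen {y : EuclideanSpace ℝ (Fin d) | 0 < g y} :=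
    isOpen_lt continuous_const (by fun_prop)
  have hxS : x ∈ {y : EuclideanSpace ℝ (Fin d) | 0 < g y} := hupos
  have hev2 : fderiv ℝ (fun y => f y t) =ᶠ[nhds x] Φ :=
    Filter.eventually_of_mem (hS2open.mem_nhds hxS) fun y hy => (hΦd y hy).fderiv
  -- derivative of Φ
  set M : EuclideanSpace ℝ (Fin d) →L[ℝ] (EuclideanSpace ℝ (Fin d) →L[ℝ] ℝ) :=
    (-2 : ℝ) • (((ContinuousLinearMap.compL ℝ (EuclideanSpace ℝ (Fin d))
      (EuclideanSpace ℝ (Fin d)) ℝ).flip L).comp (innerSL ℝ)) with hMdef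
  have hMapp : ∀ u w, M u w = -2 * (inner ℝ u (L w) : ℝ) := by
    intro u w
    simp [hMdef, innerSL_apply_apply]
  have hGM : ∀ y, G y = M (ν y) := by
    intro y; ext w; rw [hGapp, hMapp]
  have hGd : HasFDerivAt G (M.comp L) x := by
    have := M.hasFDerivAt.comp x (hνderiv x)
    exact this.congr_of_eventuallyEq (Filter.Eventually.of_forall fun y => (hGM y))
  have hsd : HasFDerivAt (fun y => β * g y ^ (β - 1))
      (β • (((β - 1) * g x ^ (β - 1 - 1)) • G x)) x :=
    (((hg x).rpow_const (p := β - 1) (Or.inl hupos.ne'))).const_mul β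
  have hΦderiv : HasFDerivAt Φ
      ((β * g x ^ (β - 1)) • (M.comp L)
        + (β • (((β - 1) * g x ^ (β - 1 - 1)) • G x)).smulRight (G x)) x :=
    hsd.smul hGd
  have hsecond : fderiv ℝ (fderiv ℝ (fun y => f y t)) x
      = (β * g x ^ (β - 1)) • (M.comp L)
        + (β • (((β - 1) * g x ^ (β - 1 - 1)) • G x)).smulRight (G x) := by
    rw [hev2.fderiv_eq]
    exact hΦderiv.fderiv
  -- evaluate each summand
  have hterm : ∀ i : Fin d,
      iteratedFDeriv ℝ 2 (fun y => f y t) x (fun _ => EuclideanSpace.single i (1 : ℝ))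
      = (β * g x ^ (β - 1)) * (-2)
        + β * ((β - 1) * g x ^ (β - 1 - 1))
            * (-2 * (inner ℝ (ν x) (L (EuclideanSpace.single i (1:ℝ))) : ℝ)) ^ 2 := by
    intro i
    have := iteratedFDeriv_two_apply (𝕜 := ℝ) (fun y => f y t) x
      (fun _ => EuclideanSpace.single i (1 : ℝ))
    rw [this, hsecond]
    set e : EuclideanSpace ℝ (Fin d) := EuclideanSpace.single i (1:ℝ) with he
    have hee : (inner ℝ e e : ℝ) = 1 := by
      simp [he, EuclideanSpace.inner_single_right, EuclideanSpace.single_apply]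
    simp only [ContinuousLinearMap.add_apply, ContinuousLinearMap.smul_apply,
      ContinuousLinearMap.smulRight_apply, ContinuousLinearMap.coe_comp', Function.comp_apply,
      smul_eq_mul]
    rw [hMapp, hLdef, inner_refl_refl a ha, hee, ← hLdef]
    rw [hGapp]
    ring
  -- sum the terms
  have hsum : ∑ i : Fin d,
      iteratedFDeriv ℝ 2 (fun y => f y t) x (fun _ => EuclideanSpace.single i (1 : ℝ))
      = (β * g x ^ (β - 1)) * (-2) * d
        + 4 * (β * ((β - 1) * g x ^ (β - 1 - 1))) * ‖ν x‖ ^ 2 := by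
    rw [Finset.sum_congr rfl fun i _ => hterm i]
    rw [Finset.sum_add_distrib, Finset.sum_const, Finset.card_univ, Fintype.card_fin,
      nsmul_eq_mul]
    have hkey : ∑ i : Fin d,
        β * ((β - 1) * g x ^ (β - 1 - 1))
          * (-2 * (inner ℝ (ν x) (L (EuclideanSpace.single i (1:ℝ))) : ℝ)) ^ 2
        = 4 * (β * ((β - 1) * g x ^ (β - 1 - 1))) * ‖ν x‖ ^ 2 := by
      have h1 : ∀ i : Fin d, (inner ℝ (ν x) (L (EuclideanSpace.single i (1:ℝ))) : ℝ)
          = (inner ℝ (L (ν x)) (EuclideanSpace.single i (1:ℝ)) : ℝ) := by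
        intro i
        rw [hLdef, inner_refl_left a]
      have h2 : ∑ i : Fin d, (inner ℝ (L (ν x)) (EuclideanSpace.single i (1:ℝ)) : ℝ) ^ 2
          = ‖ν x‖ ^ 2 := by
        rw [sum_inner_single_sq]
        rw [← real_inner_self_eq_norm_sq, ← real_inner_self_eq_norm_sq, hLdef,
          inner_refl_refl a ha]
      calc ∑ i : Fin d, β * ((β - 1) * g x ^ (β - 1 - 1))
            * (-2 * (inner ℝ (ν x) (L (EuclideanSpace.single i (1:ℝ))) : ℝ)) ^ 2
          = ∑ i : Fin d, 4 * (β * ((β - 1) * g x ^ (β - 1 - 1)))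
            * (inner ℝ (L (ν x)) (EuclideanSpace.single i (1:ℝ)) : ℝ) ^ 2 := by
            refine Finset.sum_congr rfl fun i _ => ?_
            rw [h1 i]; ring
        _ = 4 * (β * ((β - 1) * g x ^ (β - 1 - 1))) * ‖ν x‖ ^ 2 := by
            rw [← Finset.mul_sum, h2]
    rw [hkey]
    ring
  ---------------- combine ----------------
  rw [htime1, htime2, hsum]
  have hgx : g x = c ^ 2 * t ^ 2 - ‖ν x‖ ^ 2 := rfl
  rw [hgx]
  set N : ℝ := ‖ν x‖ ^ 2 with hN
  have hQP : (c ^ 2 * t ^ 2 - N) ^ (β - 1 - 1) * (c ^ 2 * t ^ 2 - N)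
      = (c ^ 2 * t ^ 2 - N) ^ (β - 1) := by
    calc (c ^ 2 * t ^ 2 - N) ^ (β - 1 - 1) * (c ^ 2 * t ^ 2 - N)
        = (c ^ 2 * t ^ 2 - N) ^ (β - 1 - 1) * (c ^ 2 * t ^ 2 - N) ^ (1:ℝ) := by
          rw [Real.rpow_one]
      _ = (c ^ 2 * t ^ 2 - N) ^ (β - 1 - 1 + 1) := (Real.rpow_add hupos _ _).symm
      _ = (c ^ 2 * t ^ 2 - N) ^ (β - 1) := by norm_num
  set P : ℝ := (c ^ 2 * t ^ 2 - N) ^ (β - 1) with hP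
  set Q : ℝ := (c ^ 2 * t ^ 2 - N) ^ (β - 1 - 1) with hQ
  have hdiv : (2 * β - 1 + (d:ℝ)) / t * (β * P * (c ^ 2 * (2 * t)))
      = (2 * β - 1 + (d:ℝ)) * (β * P * (c ^ 2 * 2)) := by
    field_simp
  rw [hdiv]
  linear_combination (4 * c ^ 2 * β * (β - 1)) * hQP
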